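/- Let a, p be real, R > 0, and let h : ℂ → ℂ satisfy A(z)h(z)^3 − 3B_2(z)h(z) − 2B_1(z) = 0 for all |z| > R. If z·h(z) converges to a complex number c as |z| → ∞ (along the cobounded filter on ℂ), then c = 2 or c = −1 (equivalently, (c+1)^2(c−2) = 0). -/

import Mathlib

set_option maxHeartbeats 1000000


open Complex Filter

/-- `A(z) = (z²-1)(z²-a²)`. -/
noncomputable def polyA (a : ℝ) (z : ℂ) : ℂ := (z ^ 2 - 1) * (z ^ 2 - (a : ℂ) ^ 2)

/-- `B₂(z) = z²-p²`. -/
noncomputable def polyB2 (p : ℝ) (z : ℂ) : ℂ := z ^ 2 - (p : ℂ) ^ 2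

/-- `B₁(z) = z`. -/
noncomputable def polyB1 (z : ℂ) : ℂ := z

/-- If `h` solves `A h³ − 3B₂ h − 2B₁ = 0` for `|z| > R` and `z·h(z) → c` as `|z| → ∞`,
then `c = 2` or `c = −1`. -/
theorem leading_coefficient_at_infinity (a p R : ℝ) (hR : 0 < R) (h : ℂ → ℂ) (c : ℂ)
    (heq : ∀ z : ℂ, R < ‖z‖ →
      polyA a z * (h z) ^ 3 - 3 * polyB2 p z * h z - 2 * polyB1 z = 0)
    (hlim : Tendsto (fun z : ℂ => z * h z) (Bornology.cobounded ℂ) (nhds c)) :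
    c = 2 ∨ c = -1 := by
  have hinv : Tendsto (fun z : ℂ => z⁻¹) (Bornology.cobounded ℂ) (nhds 0) :=
    tendsto_inv₀_cobounded
  set F : ℂ → ℂ := fun z =>
    (1 - (z⁻¹) ^ 2) * (1 - (a : ℂ) ^ 2 * (z⁻¹) ^ 2) * (z * h z) ^ 3
      - 3 * (1 - (p : ℂ) ^ 2 * (z⁻¹) ^ 2) * (z * h z) - 2 with hF
  have hFlim : Tendsto F (Bornology.cobounded ℂ)
      (nhds ((1 - 0 ^ 2) * (1 - (a : ℂ) ^ 2 * 0 ^ 2) * c ^ 3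
        - 3 * (1 - (p : ℂ) ^ 2 * 0 ^ 2) * c - 2)) := by
    apply Tendsto.sub
    apply Tendsto.sub
    · exact (((tendsto_const_nhds.sub (hinv.pow 2)).mul
        (tendsto_const_nhds.sub (tendsto_const_nhds.mul (hinv.pow 2))))).mul (hlim.pow 3)
    · exact (tendsto_const_nhds.mul (tendsto_const_nhds.sub
        (tendsto_const_nhds.mul (hinv.pow 2)))).mul hlim
    · exact tendsto_const_nhds
  have hev : ∀ᶠ z : ℂ in Bornology.cobounded ℂ, F z = 0 := by
    have : ∀ᶠ z : ℂ in Bornology.cobounded ℂ, R < ‖z‖ := by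
      filter_upwards [tendsto_norm_cobounded_atTop.eventually_gt_atTop R] with z hz
      simpa using hz
    filter_upwards [this] with z hz
    have hz0 : z ≠ 0 := by
      intro hzz
      rw [hzz] at hz
      simp at hz
      linarith
    have e := heq z hz
    unfold polyA polyB2 polyB1 at e
    have key : F z = ((z ^ 2 - 1) * (z ^ 2 - (a:ℂ) ^ 2) * h z ^ 3
        - 3 * (z ^ 2 - (p:ℂ) ^ 2) * h z - 2 * z) * z⁻¹ := by
      rw [hF]
      field_simp
    rw [key, e, zero_mul]
  have hF0 : Tendsto F (Bornology.cobounded ℂ) (nhds 0) :=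
    Tendsto.congr' (by filter_upwards [hev] with z hz using hz.symm) tendsto_const_nhds
  have hc : (1 - (0:ℂ) ^ 2) * (1 - (a : ℂ) ^ 2 * 0 ^ 2) * c ^ 3
      - 3 * (1 - (p : ℂ) ^ 2 * 0 ^ 2) * c - 2 = 0 :=
    tendsto_nhds_unique hFlim hF0
  have hc' : (c - 2) * (c + 1) ^ 2 = 0 := by linear_combination hc
  rcases mul_eq_zero.mp hc' with h1 | h2
  · left; exact sub_eq_zero.mp h1
  · right
    have h3 : c + 1 = 0 := pow_eq_zero_iff (n := 2) (by norm_num) |>.mp h2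
    exact eq_neg_of_add_eq_zero_left h3
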